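/- Let s ≥ 0 and N a positive integer. The sequence b : ℤ² → ℝ≥0 defined by b(q) = N^{−3/2}·#Γ(q) for q ∈ ℤ^{2,d}_{3N} and 0 otherwise, where Γ(q) = {(k1,k2,k3) ∈ (ℤ_N^{2,d})³ : k1 − k2 + k3 = q}, satisfies ∑_{q : |q1| ≤ N/2, q diagonal} (1+|q|²)^s b(q)² ≥ c N^{2(1+s)} for an absolute constant c > 0 (depending on s). -/

import Mathlib

open Finset

/-- The diagonal segment `ℤ_N^{2,d} = {(k,k) : |k| ≤ N}` as a finset. -/
noncomputable def diagSet (N : ℕ) : Finset (ℤ × ℤ) := (Finset.Icc (-(N:ℤ)) N).image (fun k => (k, k))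

/-- Number of triples `(k1,k2,k3) ∈ (ℤ_N^{2,d})³` with `k1 − k2 + k3 = q`. -/
noncomputable def Gam (N : ℕ) (q : ℤ × ℤ) : ℕ :=
  ((diagSet N ×ˢ diagSet N ×ˢ diagSet N).filter
    (fun k => k.1 - k.2.1 + k.2.2 = q)).card

lemma mem_diagSet {N : ℕ} {x : ℤ} (hx : -(N:ℤ) ≤ x) (hx' : x ≤ N) :
    (x, x) ∈ diagSet N :=
  Finset.mem_image_of_mem _ (Finset.mem_Icc.mpr ⟨hx, hx'⟩)

lemma gam_lb (N : ℕ) (q1 : ℤ) (hq : 2 * |q1| ≤ (N:ℤ)) :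
    (2 * (N/4) + 1)^2 ≤ Gam N (q1, q1) := by
  classical
  set M : ℕ := N / 4 with hM
  have hM4 : 4 * (M:ℤ) ≤ N := by
    have : 4 * M ≤ N := by omega
    exact_mod_cast this
  have hq' : -(N:ℤ) ≤ 2 * q1 ∧ 2 * q1 ≤ N := by
    constructor <;> nlinarith [abs_nonneg q1, le_abs_self q1, neg_abs_le q1]
  have key := Finset.card_le_card_of_injOn
    (f := fun a : ℤ × ℤ => ((a.1, a.1), (a.1 + a.2 - q1, a.1 + a.2 - q1), (a.2, a.2)))
    (s := Finset.Icc (-(M:ℤ)) M ×ˢ Finset.Icc (-(M:ℤ)) M)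
    (t := (diagSet N ×ˢ diagSet N ×ˢ diagSet N).filter
      (fun k => k.1 - k.2.1 + k.2.2 = (q1, q1)))
    (by
      intro a ha
      simp only [Finset.coe_product, Set.mem_prod, Finset.coe_Icc, Set.mem_Icc] at ha
      obtain ⟨⟨h1, h2⟩, h3, h4⟩ := ha
      refine Finset.mem_filter.mpr ⟨?_, ?_⟩
      · refine Finset.mem_product.mpr ⟨?_, Finset.mem_product.mpr ⟨?_, ?_⟩⟩
        · exact mem_diagSet (by omega) (by omega)
        · exact mem_diagSet (by omega) (by omega)
        · exact mem_diagSet (by omega) (by omega)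
      · simp only [Prod.ext_iff, Prod.fst_sub, Prod.snd_sub, Prod.fst_add, Prod.snd_add]
        constructor <;> ring)
    (by
      intro a _ b _ h
      simp only [Prod.mk.injEq] at h
      exact Prod.ext h.1.1 h.2.2.1)
  calc (2 * M + 1)^2 = (Finset.Icc (-(M:ℤ)) M ×ˢ Finset.Icc (-(M:ℤ)) M).card := by
        rw [Finset.card_product, Int.card_Icc]
        have h' : ((M:ℤ) + 1 - (-(M:ℤ))).toNat = 2*M+1 := by omega
        rw [h']; ring
    _ ≤ _ := key

lemma gam_lb_real (N : ℕ) (q1 : ℤ) (hq : 2 * |q1| ≤ (N:ℤ)) :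
    ((N:ℝ)/4)^2 ≤ (Gam N (q1, q1) : ℝ) := by
  have h1 := gam_lb N q1 hq
  have h2 : (N:ℝ)/4 ≤ ((2 * (N/4) + 1 : ℕ) : ℝ) := by
    have hn : N ≤ 8 * (N/4) + 4 := by omega
    have : (N:ℝ) ≤ ((8 * (N/4) + 4 : ℕ) : ℝ) := Nat.cast_le.mpr hn
    push_cast at this ⊢
    linarith
  calc ((N:ℝ)/4)^2 ≤ ((2 * (N/4) + 1 : ℕ) : ℝ)^2 := by
        apply pow_le_pow_left₀ (by positivity) h2
    _ ≤ (Gam N (q1, q1) : ℝ) := by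
        rw [← Nat.cast_pow]; exact_mod_cast h1

theorem stmt_18 (s : ℝ) (hs : 0 ≤ s) :
    ∃ c : ℝ, 0 < c ∧ ∀ N : ℕ, 0 < N →
      c * (N : ℝ) ^ (2 * (1 + s)) ≤
      ∑ q1 ∈ (Finset.Icc (-(3 * N : ℤ)) (3 * N)).filter (fun q1 => 2 * |q1| ≤ (N : ℤ)),
        (1 + 2 * (q1 : ℝ) ^ 2) ^ s * ((N : ℝ) ^ (-(3:ℝ)/2) * (Gam N (q1, q1) : ℝ)) ^ 2 := by
  classical
  refine ⟨1 / (1024 * (64:ℝ)^s), by positivity, ?_⟩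
  intro N hN
  have hNR : (0:ℝ) < N := by exact_mod_cast hN
  set F := (Finset.Icc (-(3 * N : ℤ)) (3 * N)).filter (fun q1 => 2 * |q1| ≤ (N : ℤ)) with hF
  set T := Finset.Icc ((N/2 : ℕ) - (N/4 : ℕ) : ℤ) ((N/2 : ℕ) : ℤ) with hT
  have hTF : T ⊆ F := by
    intro x hx
    simp only [hT, Finset.mem_Icc] at hx
    have h24 : ((N/4 : ℕ) : ℤ) ≤ ((N/2 : ℕ) : ℤ) := by
      have : (N/4 : ℕ) ≤ (N/2 : ℕ) := by omega
      exact_mod_cast this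
    have hx0 : 0 ≤ x := le_trans (by omega) hx.1
    simp only [hF, Finset.mem_filter, Finset.mem_Icc]
    refine ⟨⟨by omega, ?_⟩, ?_⟩
    · have : ((N/2 : ℕ) : ℤ) ≤ 3 * N := by
        have : (N/2 : ℕ) ≤ 3 * N := by omega
        exact_mod_cast this
      omega
    · rw [abs_of_nonneg hx0]
      have h2 : ((N/2 : ℕ) : ℤ) * 2 ≤ N := by
        have : (N/2) * 2 ≤ N := by omega
        exact_mod_cast this
      omega
  -- lower bound for each term over T
  set tlb : ℝ := ((N:ℝ)^2/64)^s * ((N:ℝ)^(-(3:ℝ)/2) * ((N:ℝ)/4)^2)^2 with htlb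
  have hterm : ∀ q1 ∈ T, tlb ≤
      (1 + 2 * (q1 : ℝ) ^ 2) ^ s * ((N : ℝ) ^ (-(3:ℝ)/2) * (Gam N (q1, q1) : ℝ)) ^ 2 := by
    intro q1 hq1
    simp only [hT, Finset.mem_Icc] at hq1
    have hq1' : 2 * |q1| ≤ (N:ℤ) := by
      have h24 : ((N/4 : ℕ) : ℤ) ≤ ((N/2 : ℕ) : ℤ) := by
        have : (N/4 : ℕ) ≤ (N/2 : ℕ) := by omega
        exact_mod_cast this
      have hx0 : 0 ≤ q1 := le_trans (by omega) hq1.1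
      rw [abs_of_nonneg hx0]
      have h2 : ((N/2 : ℕ) : ℤ) * 2 ≤ N := by
        have : (N/2) * 2 ≤ N := by exact Nat.div_mul_le_self N 2
        exact_mod_cast this
      omega
    have hw : (N:ℝ)^2/64 ≤ 1 + 2 * (q1:ℝ)^2 := by
      rcases le_or_gt N 8 with h8 | h8
      · have : (N:ℝ) ≤ 8 := by exact_mod_cast h8
        nlinarith [sq_nonneg (q1:ℝ)]
      · have hr : (N:ℤ) ≤ 8 * ((N/2 : ℕ) - (N/4 : ℕ) : ℤ) := by
          have : (N:ℕ) ≤ 8 * (N/2 - N/4) := by omega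
          have h24 : (N/4 : ℕ) ≤ (N/2 : ℕ) := by omega
          push_cast
          omega
        have hq8 : (N:ℝ) ≤ 8 * (q1:ℝ) := by
          have : (N:ℤ) ≤ 8 * q1 := le_trans hr (by linarith [hq1.1])
          exact_mod_cast this
        nlinarith [sq_nonneg (q1:ℝ)]
    have hwpow : ((N:ℝ)^2/64)^s ≤ (1 + 2 * (q1:ℝ)^2)^s :=
      Real.rpow_le_rpow (by positivity) hw hs
    have hg : ((N:ℝ)^(-(3:ℝ)/2) * ((N:ℝ)/4)^2)^2 ≤
        ((N : ℝ) ^ (-(3:ℝ)/2) * (Gam N (q1, q1) : ℝ)) ^ 2 := by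
      apply pow_le_pow_left₀ (by positivity)
      exact mul_le_mul_of_nonneg_left (gam_lb_real N q1 hq1') (by positivity)
    calc tlb ≤ ((N:ℝ)^2/64)^s * ((N : ℝ) ^ (-(3:ℝ)/2) * (Gam N (q1, q1) : ℝ)) ^ 2 := by
          rw [htlb]; exact mul_le_mul_of_nonneg_left hg (by positivity)
      _ ≤ _ := mul_le_mul_of_nonneg_right hwpow (by positivity)
  have hsum1 : (T.card : ℝ) * tlb ≤ ∑ q1 ∈ T,
      (1 + 2 * (q1 : ℝ) ^ 2) ^ s * ((N : ℝ) ^ (-(3:ℝ)/2) * (Gam N (q1, q1) : ℝ)) ^ 2 := by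
    have := Finset.card_nsmul_le_sum T _ tlb hterm
    simpa [nsmul_eq_mul] using this
  have hsum2 : ∑ q1 ∈ T, (1 + 2 * (q1 : ℝ) ^ 2) ^ s * ((N : ℝ) ^ (-(3:ℝ)/2) * (Gam N (q1, q1) : ℝ)) ^ 2
      ≤ ∑ q1 ∈ F, (1 + 2 * (q1 : ℝ) ^ 2) ^ s * ((N : ℝ) ^ (-(3:ℝ)/2) * (Gam N (q1, q1) : ℝ)) ^ 2 := by
    apply Finset.sum_le_sum_of_subset_of_nonneg hTF
    intro i _ _
    positivity
  -- card T
  have hcard : ((N:ℝ)/4) ≤ (T.card : ℝ) := by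
    have hc : T.card = N/4 + 1 := by
      rw [hT, Int.card_Icc]
      have h24 : (N/4 : ℕ) ≤ (N/2 : ℕ) := by omega
      have : ((N/2 : ℕ) : ℤ) + 1 - (((N/2 : ℕ) : ℤ) - ((N/4 : ℕ) : ℤ)) = (N/4 : ℕ) + 1 := by ring
      push_cast
      omega
    rw [hc]
    have hn : N ≤ 4 * (N/4) + 4 := by omega
    have : (N:ℝ) ≤ ((4 * (N/4) + 4 : ℕ) : ℝ) := Nat.cast_le.mpr hn
    push_cast at this ⊢
    linarith
  -- final numeric bound
  have hfin : 1 / (1024 * (64:ℝ)^s) * (N : ℝ) ^ (2 * (1 + s)) ≤ (T.card : ℝ) * tlb := by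
    have hA : (0:ℝ) < (N:ℝ)^(2*s) := Real.rpow_pos_of_pos hNR _
    have hB : (0:ℝ) < (64:ℝ)^s := Real.rpow_pos_of_pos (by norm_num) _
    have e1 : (N : ℝ) ^ (2 * (1 + s)) = (N:ℝ)^2 * (N:ℝ)^(2*s) := by
      rw [show 2 * (1 + s) = (2:ℝ) + 2*s by ring, Real.rpow_add hNR]
      norm_num [Real.rpow_two]
    have hx : ((N:ℝ)^(-(3:ℝ)/2))^2 = (N:ℝ)^(-(3:ℝ)) := by
      rw [← Real.rpow_natCast ((N:ℝ)^(-(3:ℝ)/2)) 2, ← Real.rpow_mul hNR.le]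
      norm_num
    have hy : ((N:ℝ)^2/64)^s = (N:ℝ)^(2*s)/(64:ℝ)^s := by
      rw [Real.div_rpow (by positivity) (by norm_num), ← Real.rpow_natCast (N:ℝ) 2,
        ← Real.rpow_mul hNR.le]
      norm_num
    have hz : (N:ℝ)^(-(3:ℝ)) * (N:ℝ)^4 = (N:ℝ) := by
      rw [← Real.rpow_natCast (N:ℝ) 4, ← Real.rpow_add hNR]
      norm_num
    have e2 : tlb = (N:ℝ)^(2*s)/(64:ℝ)^s * ((N:ℝ)/256) := by
      rw [htlb, hy, mul_pow, hx,
        show (((N:ℝ)/4)^2)^2 = (N:ℝ)^4/256 by ring,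
        show (N:ℝ)^(-(3:ℝ)) * ((N:ℝ)^4/256) = ((N:ℝ)^(-(3:ℝ)) * (N:ℝ)^4)/256 by ring, hz]
    rw [e1, e2]
    have hre : (N:ℝ)^(2*s)/(64:ℝ)^s * ((N:ℝ)/256) * (1024*(64:ℝ)^s) = (N:ℝ)^(2*s) * ((N:ℝ) * 4) := by
      field_simp
      ring
    rw [div_mul_eq_mul_div, one_mul, div_le_iff₀ (by positivity)]
    have hre : (T.card:ℝ) * ((N:ℝ)^(2*s)/(64:ℝ)^s * ((N:ℝ)/256)) * (1024*(64:ℝ)^s)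
        = (N:ℝ)^(2*s) * ((T.card:ℝ) * ((N:ℝ) * 4)) := by
      field_simp
      ring
    rw [hre]
    have h1 : (N:ℝ)^2 ≤ (T.card:ℝ) * ((N:ℝ) * 4) := by nlinarith
    nlinarith
  calc 1 / (1024 * (64:ℝ)^s) * (N : ℝ) ^ (2 * (1 + s)) ≤ (T.card : ℝ) * tlb := hfin
    _ ≤ _ := le_trans hsum1 hsum2
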